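/- In any execution of the maximal matching algorithm, each node executes the Update rule at most twice. -/

import Mathlib

structure Config (V : Type*) where
  p : V → Option V
  m : V → Bool

variable {V : Type*}

def PRmarried (G : SimpleGraph V) (p : V → Option V) (i : V) : Prop :=
  ∃ j, G.Adj i j ∧ p i = some j ∧ p j = some i

def PRwaiting (G : SimpleGraph V) (p : V → Option V) (i : V) : Prop :=
  ∃ j, G.Adj i j ∧ p i = some j ∧ p j ≠ some i ∧ ¬ PRmarried G p j

def PRcondemned (G : SimpleGraph V) (p : V → Option V) (i : V) : Prop :=
  ∃ j, G.Adj i j ∧ p i = some j ∧ p j ≠ some i ∧ PRmarried G p j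

def PRdead (G : SimpleGraph V) (p : V → Option V) (i : V) : Prop :=
  p i = none ∧ ∀ j, G.Adj i j → PRmarried G p j

def PRfree (G : SimpleGraph V) (p : V → Option V) (i : V) : Prop :=
  p i = none ∧ ∃ j, G.Adj i j ∧ ¬ PRmarried G p j

def Valid (G : SimpleGraph V) (C : Config V) : Prop :=
  ∀ i j, C.p i = some j → G.Adj i j

section Rules
variable [LinearOrder V]

def UpdateEnabled (G : SimpleGraph V) (C : Config V) (i : V) : Prop :=
  ¬ (C.m i = true ↔ PRmarried G C.p i)

def MarriageEnabled (G : SimpleGraph V) (C : Config V) (i : V) : Prop :=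
  (C.m i = true ↔ PRmarried G C.p i) ∧ C.p i = none ∧ ∃ j, G.Adj i j ∧ C.p j = some i

def SeductionEnabled (G : SimpleGraph V) (C : Config V) (i : V) : Prop :=
  (C.m i = true ↔ PRmarried G C.p i) ∧ C.p i = none ∧
    (∀ k, G.Adj i k → C.p k ≠ some i) ∧
    ∃ j, G.Adj i j ∧ C.p j = none ∧ i < j ∧ C.m j = false

def AbandonmentEnabled (G : SimpleGraph V) (C : Config V) (i : V) : Prop :=
  (C.m i = true ↔ PRmarried G C.p i) ∧
    ∃ j, G.Adj i j ∧ C.p i = some j ∧ C.p j ≠ some i ∧ (C.m j = true ∨ j ≤ i)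

def Eligible (G : SimpleGraph V) (C : Config V) (i : V) : Prop :=
  UpdateEnabled G C i ∨ MarriageEnabled G C i ∨ SeductionEnabled G C i ∨ AbandonmentEnabled G C i

def Stable (G : SimpleGraph V) (C : Config V) : Prop := ∀ i, ¬ Eligible G C i

def Unchanged (C C' : Config V) (i : V) : Prop := C'.p i = C.p i ∧ C'.m i = C.m i

def DoesUpdate (G : SimpleGraph V) (C C' : Config V) (i : V) : Prop :=
  UpdateEnabled G C i ∧ C'.p i = C.p i ∧ (C'.m i = true ↔ PRmarried G C.p i)

def DoesMarriageTo (G : SimpleGraph V) (C C' : Config V) (i j : V) : Prop :=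
  MarriageEnabled G C i ∧ G.Adj i j ∧ C.p j = some i ∧ C'.p i = some j ∧ C'.m i = C.m i

def DoesSeductionTo (G : SimpleGraph V) (C C' : Config V) (i j : V) : Prop :=
  SeductionEnabled G C i ∧ G.Adj i j ∧ C.p j = none ∧ i < j ∧ C.m j = false ∧
    (∀ k, G.Adj i k → C.p k = none → i < k → C.m k = false → k ≤ j) ∧
    C'.p i = some j ∧ C'.m i = C.m i

def DoesAbandonmentFrom (G : SimpleGraph V) (C C' : Config V) (i j : V) : Prop :=
  AbandonmentEnabled G C i ∧ C.p i = some j ∧ C'.p i = none ∧ C'.m i = C.m i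

def Moves (G : SimpleGraph V) (C C' : Config V) (i : V) : Prop :=
  DoesUpdate G C C' i ∨ (∃ j, DoesMarriageTo G C C' i j) ∨
    (∃ j, DoesSeductionTo G C C' i j) ∨ (∃ j, DoesAbandonmentFrom G C C' i j)

def Step (G : SimpleGraph V) (C C' : Config V) : Prop :=
  (∃ i, Moves G C C' i) ∧ ∀ i, Moves G C C' i ∨ Unchanged C C' i

def MSAMoveTo (G : SimpleGraph V) (C C' : Config V) (i j : V) : Prop :=
  DoesMarriageTo G C C' i j ∨ DoesSeductionTo G C C' i j ∨ DoesAbandonmentFrom G C C' i j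

def IJMove (G : SimpleGraph V) (C C' : Config V) (i j : V) : Prop :=
  MSAMoveTo G C C' i j ∨ MSAMoveTo G C C' j i

end Rules

section Aux
variable [LinearOrder V]

lemma p_fixed_of_married {G : SimpleGraph V} {C C' : Config V} {i j : V}
    (h : Step G C C') (hi : C.p i = some j) (hj : C.p j = some i) :
    C'.p i = C.p i := by
  rcases h.2 i with hm | hu
  · rcases hm with hU | ⟨k, hM⟩ | ⟨k, hS⟩ | ⟨k, hA⟩
    · exact hU.2.1
    · exact absurd hM.1.2.1 (by simp [hi])
    · exact absurd hS.1.2.1 (by simp [hi])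
    · obtain ⟨_, j', _, hij', hne, _⟩ := hA.1
      rw [hi] at hij'
      cases hij'
      exact absurd hj hne
  · exact hu.1

lemma married_step {G : SimpleGraph V} {C C' : Config V} {i : V}
    (h : Step G C C') (hm : PRmarried G C.p i) : PRmarried G C'.p i := by
  obtain ⟨j, hadj, hi, hj⟩ := hm
  exact ⟨j, hadj, by rw [p_fixed_of_married h hi hj, hi],
    by rw [p_fixed_of_married h hj hi, hj]⟩

lemma m_step {G : SimpleGraph V} {C C' : Config V} {i : V}
    (h : Step G C C') : C'.m i = C.m i ∨ DoesUpdate G C C' i := by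
  rcases h.2 i with hm | hu
  · rcases hm with hU | ⟨k, hM⟩ | ⟨k, hS⟩ | ⟨k, hA⟩
    · exact Or.inr hU
    · exact Or.inl hM.2.2.2.2
    · exact Or.inl hS.2.2.2.2.2.2.2
    · exact Or.inl hA.2.2.2
  · exact Or.inl hu.2

end Aux

open scoped Classical in
theorem update_at_most_twice [Fintype V] [LinearOrder V] (G : SimpleGraph V)
    (C : ℕ → Config V) (L : ℕ) (hstep : ∀ t, t < L → Step G (C t) (C (t+1)))
    (hvalid : Valid G (C 0)) (i : V) :
    ((Finset.range L).filter (fun t => DoesUpdate G (C t) (C (t+1)) i)).card ≤ 2 := by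
  -- persistence of marriage
  have hpersist : ∀ s t : ℕ, s ≤ t → t ≤ L → PRmarried G (C s).p i → PRmarried G (C t).p i := by
    intro s t hst htL hm
    induction t, hst using Nat.le_induction with
    | base => exact hm
    | succ u hsu ih =>
      exact married_step (hstep u (by omega)) (ih (by omega))
  -- m constant without updates
  have hconst : ∀ s t : ℕ, s ≤ t → t ≤ L →
      (∀ u, s ≤ u → u < t → ¬ DoesUpdate G (C u) (C (u+1)) i) →
      (C t).m i = (C s).m i := by
    intro s t hst htL hno
    induction t, hst using Nat.le_induction with
    | base => rfl
    | succ u hsu ih =>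
      have h1 : (C u).m i = (C s).m i := ih (by omega) (fun v hv hv' => hno v hv (by omega))
      rcases m_step (G := G) (hstep u (by omega)) (i := i) with he | hup
      · rw [he, h1]
      · exact absurd hup (hno u hsu (by omega))
  -- L1: after an update while married, no further updates
  have hL1 : ∀ t, t < L → DoesUpdate G (C t) (C (t+1)) i → PRmarried G (C t).p i →
      ∀ u, t < u → u < L → ¬ DoesUpdate G (C u) (C (u+1)) i := by
    intro t htL hupd hmar
    have key : ∀ u, t + 1 ≤ u → u ≤ L → (C u).m i = true ∧ PRmarried G (C u).p i := by
      intro u hu huL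
      induction u, hu using Nat.le_induction with
      | base =>
        exact ⟨hupd.2.2.mpr hmar, married_step (hstep t htL) hmar⟩
      | succ v hv ih =>
        have hvL : v < L := by omega
        obtain ⟨hmv, hmarv⟩ := ih (by omega)
        have hnoup : ¬ DoesUpdate G (C v) (C (v+1)) i := by
          intro hup
          exact hup.1 (by simp [hmv, hmarv])
        rcases m_step (G := G) (hstep v hvL) (i := i) with he | hup
        · exact ⟨by rw [he, hmv], married_step (hstep v hvL) hmarv⟩
        · exact absurd hup hnoup
    intro u htu huL hup
    obtain ⟨hmu, hmaru⟩ := key u (by omega) (by omega)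
    exact hup.1 (by simp [hmu, hmaru])
  -- L2: update while unmarried, then any later update happens while married
  have hL2 : ∀ t' t : ℕ, t < t' → t' < L → DoesUpdate G (C t) (C (t+1)) i →
      DoesUpdate G (C t') (C (t'+1)) i → ¬ PRmarried G (C t).p i →
      PRmarried G (C t').p i := by
    intro t'
    induction t' using Nat.strong_induction_on with
    | _ t' IH =>
      intro t htt' ht'L hupt hupt' hnm
      by_cases hmid : ∃ u, t < u ∧ u < t' ∧ DoesUpdate G (C u) (C (u+1)) i
      · obtain ⟨u, htu, hut', hupu⟩ := hmid
        by_cases hmu : PRmarried G (C u).p i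
        · exact absurd hupt' (hL1 u (by omega) hupu hmu t' hut' ht'L)
        · exact absurd (IH u hut' t htu (by omega) hupt hupu hnm) hmu
      · push_neg at hmid
        have hmt1 : (C (t+1)).m i = false := by
          have := hupt.2.2
          simp only [hnm, iff_false] at this
          simpa using this
        have hmt' : (C t').m i = false := by
          rw [hconst (t+1) t' (by omega) (by omega)
            (fun u hu hu' => hmid u (by omega) (by omega)), hmt1]
        by_contra hnmt'
        exact hupt'.1 (by simp [hmt', hnmt'])
  -- extract three update times if card ≥ 3
  by_contra hcard
  push_neg at hcard
  obtain ⟨u, hus, hucard⟩ := Finset.exists_subset_card_eq (n := 3) hcard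
  have e := u.orderIsoOfFin hucard
  have hmem : ∀ k : Fin 3, ((e k : ℕ) < L ∧ DoesUpdate G (C (e k)) (C ((e k) + 1)) i) := by
    intro k
    have : (e k : ℕ) ∈ (Finset.range L).filter (fun t => DoesUpdate G (C t) (C (t+1)) i) :=
      hus (e k).2
    simpa using this
  have h01 : (e 0 : ℕ) < (e 1 : ℕ) := by
    have := e.strictMono (show (0 : Fin 3) < 1 by decide)
    exact_mod_cast this
  have h12 : (e 1 : ℕ) < (e 2 : ℕ) := by
    have := e.strictMono (show (1 : Fin 3) < 2 by decide)
    exact_mod_cast this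
  obtain ⟨h0L, h0u⟩ := hmem 0
  obtain ⟨h1L, h1u⟩ := hmem 1
  obtain ⟨h2L, h2u⟩ := hmem 2
  by_cases hm0 : PRmarried G (C (e 0)).p i
  · exact hL1 (e 0) h0L h0u hm0 (e 1) h01 h1L h1u
  · have hm1 : PRmarried G (C (e 1)).p i := hL2 (e 1) (e 0) h01 h1L h0u h1u hm0
    exact hL1 (e 1) h1L h1u hm1 (e 2) h12 h2L h2u
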